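/- Let H be a separable infinite-dimensional complex Hilbert space and J̃ : H → H an anti-conjugation, i.e., a conjugate-linear isometric bijection with J̃∘J̃ = −id. Let T be any compact operator on H satisfying T = −J̃ T* J̃⁻¹ (i.e., T ∈ sp_∞(H)). Then there exist compact operators X and Y on H, both satisfying the same condition X = −J̃X*J̃⁻¹ and Y = −J̃Y*J̃⁻¹, such that T = (X*∘X − X∘X*) + i·(Y*∘Y − Y∘Y*). -/

import Mathlib

open ContinuousLinearMap

namespace Sp11Aux

noncomputable section

open Complex Filter Topology Set
open scoped ENNReal NNReal

variable {H : Type*} [NormedAddCommGroup H] [InnerProductSpace ℂ H]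

local notation "⟪" x ", " y "⟫" => @inner ℂ _ _ x y

/-! ### lp helper lemmas -/

theorem ofReal_mul_re (r : ℝ) (z : ℂ) : ((r : ℂ) * z).re = r * z.re := by
  simp [Complex.mul_re]

theorem memℓp_two_of_le {ι : Type*} {y : lp (fun _ : ι => ℂ) 2} {f : ι → ℂ} {M : ℝ}
    (h : ∀ i, ‖f i‖ ≤ M * ‖y i‖) : Memℓp f 2 := by
  have hp : 0 < (2 : ℝ≥0∞).toReal := by norm_num
  apply memℓp_gen
  have hy : Summable fun i => ‖y i‖ ^ (2 : ℝ≥0∞).toReal := (lp.memℓp y).summable hp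
  have hy' : Summable fun i => M ^ 2 * ‖y i‖ ^ (2 : ℝ≥0∞).toReal := hy.mul_left _
  apply hy'.of_nonneg_of_le
  · intro i
    positivity
  · intro i
    have h1 : ‖f i‖ ^ (2 : ℝ≥0∞).toReal = ‖f i‖ ^ (2 : ℕ) := by
      norm_num [Real.rpow_natCast]
    have h2 : ‖y i‖ ^ (2 : ℝ≥0∞).toReal = ‖y i‖ ^ (2 : ℕ) := by
      norm_num [Real.rpow_natCast]
    rw [h1, h2]
    calc ‖f i‖ ^ (2:ℕ) ≤ (M * ‖y i‖) ^ (2:ℕ) :=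
          pow_le_pow_left₀ (norm_nonneg _) (h i) 2
      _ = M ^ 2 * ‖y i‖ ^ (2:ℕ) := by ring

theorem lp_norm_le_of_le {ι : Type*} {x y : lp (fun _ : ι => ℂ) 2} {M : ℝ} (hM : 0 ≤ M)
    (h : ∀ i, ‖x i‖ ≤ M * ‖y i‖) : ‖x‖ ≤ M * ‖y‖ := by
  have hp : 0 < (2 : ℝ≥0∞).toReal := by norm_num
  refine lp.norm_le_of_forall_sum_le hp (by positivity) fun s => ?_
  have hle : ∀ i ∈ s, ‖x i‖ ^ (2 : ℝ≥0∞).toReal ≤ M ^ (2 : ℝ≥0∞).toReal * ‖y i‖ ^ (2 : ℝ≥0∞).toReal := by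
    intro i _
    rw [← Real.mul_rpow hM (norm_nonneg _)]
    exact Real.rpow_le_rpow (norm_nonneg _) (h i) (le_of_lt hp)
  calc ∑ i ∈ s, ‖x i‖ ^ (2 : ℝ≥0∞).toReal
      ≤ ∑ i ∈ s, M ^ (2 : ℝ≥0∞).toReal * ‖y i‖ ^ (2 : ℝ≥0∞).toReal :=
        Finset.sum_le_sum hle
    _ = M ^ (2 : ℝ≥0∞).toReal * ∑ i ∈ s, ‖y i‖ ^ (2 : ℝ≥0∞).toReal := by
        rw [Finset.mul_sum]
    _ ≤ M ^ (2 : ℝ≥0∞).toReal * ‖y‖ ^ (2 : ℝ≥0∞).toReal := by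
        apply mul_le_mul_of_nonneg_left (lp.sum_rpow_le_norm_rpow hp y s)
        positivity
    _ = (M * ‖y‖) ^ (2 : ℝ≥0∞).toReal := (Real.mul_rpow hM (norm_nonneg _)).symm

/-! ### Anti-conjugations -/

/-- An anti-conjugation on a complex Hilbert space. -/
structure AntiConj (H : Type*) [NormedAddCommGroup H] [InnerProductSpace ℂ H] : Type _ where
  J : H → H
  add' : ∀ v w, J (v + w) = J v + J w
  smul' : ∀ (c : ℂ) (v : H), J (c • v) = (starRingEnd ℂ) c • J v
  norm' : ∀ v, ‖J v‖ = ‖v‖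
  JJ : ∀ v, J (J v) = -v

namespace AntiConj

variable (j : AntiConj H)

theorem map_zero : j.J 0 = 0 := by
  have h := j.add' 0 0
  rw [add_zero] at h
  exact left_eq_add.mp h

theorem map_neg (v : H) : j.J (-v) = -j.J v := by
  have h : j.J (-v) + j.J v = 0 := by
    rw [← j.add', neg_add_cancel, j.map_zero]
  exact eq_neg_of_add_eq_zero_left h

theorem map_sub (v w : H) : j.J (v - w) = j.J v - j.J w := by
  rw [sub_eq_add_neg, j.add', j.map_neg, sub_eq_add_neg]

theorem continuous : Continuous j.J := by
  have : Isometry j.J := by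
    refine Isometry.of_dist_eq fun x y => ?_
    rw [dist_eq_norm, dist_eq_norm, ← j.map_sub, j.norm']
  exact this.continuous

theorem real_smul (r : ℝ) (v : H) : j.J ((r : ℂ) • v) = (r : ℂ) • j.J v := by
  rw [j.smul', Complex.conj_ofReal]

theorem inner_map (v w : H) : ⟪j.J v, j.J w⟫ = ⟪w, v⟫ := by
  have hre : ∀ v w : H, Complex.re ⟪j.J v, j.J w⟫ = Complex.re ⟪v, w⟫ := by
    intro v w
    have h1 := @norm_add_sq ℂ _ _ _ _ (j.J v) (j.J w)
    have h2 := @norm_add_sq ℂ _ _ _ _ v w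
    rw [← j.add', j.norm', j.norm', j.norm'] at h1
    rw [h2] at h1
    simp only [RCLike.re_to_complex] at h1
    linarith
  have him : Complex.im ⟪j.J v, j.J w⟫ = -Complex.im ⟪v, w⟫ := by
    have h3 := hre v ((Complex.I : ℂ) • w)
    rw [j.smul'] at h3
    rw [inner_smul_right, inner_smul_right] at h3
    simp only [Complex.conj_I] at h3
    rw [Complex.mul_re, Complex.mul_re] at h3
    simp only [Complex.I_re, Complex.I_im, Complex.neg_re, Complex.neg_im] at h3
    linarith
  have hconj : ⟪j.J v, j.J w⟫ = (starRingEnd ℂ) ⟪v, w⟫ := by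
    apply Complex.ext
    · rw [Complex.conj_re]; exact hre v w
    · rw [Complex.conj_im]; exact him
  rw [hconj, inner_conj_symm]

theorem inner_left (v w : H) : ⟪j.J v, w⟫ = -⟪j.J w, v⟫ := by
  have h := j.inner_map v (j.J (-w))
  rw [j.JJ, neg_neg] at h
  rw [h, j.map_neg, inner_neg_left]

/-- Conjugation of an operator by the anti-conjugation: `S ↦ J ∘ S ∘ J`. -/
def conjJ (S : H →L[ℂ] H) : H →L[ℂ] H :=
  LinearMap.mkContinuous
    { toFun := fun v => j.J (S (j.J v))
      map_add' := fun v w => by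
        show j.J (S (j.J (v + w))) = j.J (S (j.J v)) + j.J (S (j.J w))
        rw [j.add', map_add, j.add']
      map_smul' := fun c v => by
        show j.J (S (j.J (c • v))) = c • j.J (S (j.J v))
        rw [j.smul', map_smul, j.smul', starRingEnd_self_apply] }
    ‖S‖ fun v => by
      simp only [LinearMap.coe_mk, AddHom.coe_mk]
      rw [j.norm']
      calc ‖S (j.J v)‖ ≤ ‖S‖ * ‖j.J v‖ := S.le_opNorm _
        _ = ‖S‖ * ‖v‖ := by rw [j.norm']

@[simp] theorem conjJ_apply (S : H →L[ℂ] H) (v : H) : j.conjJ S v = j.J (S (j.J v)) := rfl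

theorem isCompactOperator_conjJ {S : H →L[ℂ] H} (hS : IsCompactOperator ⇑S) :
    IsCompactOperator ⇑(j.conjJ S) := by
  obtain ⟨K, hK, hKmem⟩ := hS
  refine ⟨j.J '' K, hK.image j.continuous, ?_⟩
  have h0 : j.J ⁻¹' (⇑S ⁻¹' K) ∈ 𝓝 (0 : H) := by
    have hc : ContinuousAt j.J 0 := j.continuous.continuousAt
    apply hc.preimage_mem_nhds
    rwa [j.map_zero]
  refine Filter.mem_of_superset h0 fun v hv => ?_
  exact ⟨S (j.J v), hv, rfl⟩

theorem adjoint_conjJ [CompleteSpace H] (S : H →L[ℂ] H) :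
    adjoint (j.conjJ S) = j.conjJ (adjoint S) := by
  symm
  rw [eq_adjoint_iff]
  intro x y
  rw [conjJ_apply, conjJ_apply]
  have h1 : ⟪j.J ((adjoint S) (j.J x)), y⟫ = -⟪j.J y, (adjoint S) (j.J x)⟫ := j.inner_left _ y
  rw [h1, adjoint_inner_right]
  have h2 : ⟪S (j.J y), j.J x⟫ = (starRingEnd ℂ) ⟪j.J x, S (j.J y)⟫ := (inner_conj_symm _ _).symm
  rw [h2, j.inner_left x (S (j.J y))]
  rw [_root_.map_neg, neg_neg, inner_conj_symm]

end AntiConj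

/-! ### Eigenvector existence for compact self-adjoint operators -/

section Spectral

variable {V : Type*} [NormedAddCommGroup V] [InnerProductSpace ℂ V] [CompleteSpace V]

theorem opNorm_le_of_rayleigh {S : V →L[ℂ] V} (hS : IsSelfAdjoint S) {c : ℝ} (hc : 0 ≤ c)
    (h : ∀ x : V, |Complex.re ⟪S x, x⟫| ≤ c * ‖x‖ ^ 2) : ‖S‖ ≤ c := by
  have hsym := (isSelfAdjoint_iff_isSymmetric).mp hS
  refine opNorm_le_bound _ hc fun x => ?_
  rcases eq_or_ne (S x) 0 with h0 | h0
  · rw [h0, norm_zero]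
    positivity
  have hx : x ≠ 0 := by
    intro h'
    rw [h', map_zero] at h0
    exact h0 rfl
  have hxn : 0 < ‖x‖ := norm_pos_iff.mpr hx
  have hSxn : 0 < ‖S x‖ := norm_pos_iff.mpr h0
  set y : V := ((‖x‖ / ‖S x‖ : ℝ) : ℂ) • S x with hy
  have hyn : ‖y‖ = ‖x‖ := by
    rw [hy, norm_smul, Complex.norm_real, Real.norm_eq_abs,
      _root_.abs_of_nonneg (div_nonneg (norm_nonneg x) (norm_nonneg (S x))),
      div_mul_cancel₀ _ (ne_of_gt hSxn)]
  -- four-point identity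
  have hkey : 4 * (‖x‖ * ‖S x‖) =
      Complex.re ⟪S (x + y), x + y⟫ - Complex.re ⟪S (x - y), x - y⟫ := by
    have e1 : ⟪S (x + y), x + y⟫ = ⟪S x, x⟫ + ⟪S x, y⟫ + ⟪S y, x⟫ + ⟪S y, y⟫ := by
      rw [map_add, inner_add_left, inner_add_right, inner_add_right]
      ring
    have e2 : ⟪S (x - y), x - y⟫ = ⟪S x, x⟫ - ⟪S x, y⟫ - ⟪S y, x⟫ + ⟪S y, y⟫ := by
      rw [map_sub, inner_sub_left, inner_sub_right, inner_sub_right]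
      ring
    have hyx : Complex.re ⟪S y, x⟫ = Complex.re ⟪S x, y⟫ := by
      have t1 : ⟪S y, x⟫ = ⟪y, S x⟫ := hsym y x
      have h' : ⟪S y, x⟫ = (starRingEnd ℂ) ⟪S x, y⟫ := by
        rw [t1, ← inner_conj_symm y (S x)]
      rw [h', Complex.conj_re]
    have hxy : Complex.re ⟪S x, y⟫ = ‖x‖ * ‖S x‖ := by
      rw [hy, inner_smul_right, ofReal_mul_re]
      have h2 : Complex.re ⟪S x, S x⟫ = ‖S x‖ ^ 2 := inner_self_eq_norm_sq (𝕜 := ℂ) (S x)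
      rw [h2]
      field_simp
    rw [e1, e2]
    simp only [Complex.add_re, Complex.sub_re]
    rw [hyx, hxy]
    ring
  have hb1 : |Complex.re ⟪S (x + y), x + y⟫| ≤ c * ‖x + y‖ ^ 2 := h _
  have hb2 : |Complex.re ⟪S (x - y), x - y⟫| ≤ c * ‖x - y‖ ^ 2 := h _
  have hpar : ‖x + y‖ * ‖x + y‖ + ‖x - y‖ * ‖x - y‖ = 2 * (‖x‖ * ‖x‖ + ‖y‖ * ‖y‖) :=
    by have := parallelogram_law_with_norm ℂ x y; simp only [pow_two] at this; exact this
  have hfin : 4 * (‖x‖ * ‖S x‖) ≤ 4 * (c * ‖x‖ ^ 2) := by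
    have hb1' := (abs_le.mp hb1).2
    have hb2' := (abs_le.mp hb2).1
    have hsq : ‖x + y‖ ^ 2 + ‖x - y‖ ^ 2 = 2 * (‖x‖ ^ 2 + ‖y‖ ^ 2) := by
      simp only [pow_two]
      exact hpar
    have hy2 : ‖y‖ ^ 2 = ‖x‖ ^ 2 := by rw [hyn]
    have hmul : c * ‖x + y‖ ^ 2 + c * ‖x - y‖ ^ 2 = 4 * (c * ‖x‖ ^ 2) := by
      rw [← mul_add, hsq, hy2]
      ring
    rw [hkey]
    linarith
  by_contra hcon
  push_neg at hcon
  have := mul_lt_mul_of_pos_right hcon hxn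
  nlinarith

theorem exists_unit_eigenvector {S : V →L[ℂ] V} (hcpt : IsCompactOperator ⇑S)
    (hS : IsSelfAdjoint S) (hne : S ≠ 0) :
    ∃ (x : V) (r : ℝ), ‖x‖ = 1 ∧ S x = (r : ℂ) • x := by
  have hnorm_pos : 0 < ‖S‖ := by
    rw [norm_pos_iff]
    exact hne
  -- a unit vector exists
  have hunit : ∃ u : V, ‖u‖ = 1 := by
    have : ∃ x : V, S x ≠ 0 := by
      by_contra hcon
      push_neg at hcon
      exact hne (ContinuousLinearMap.ext fun x => by simp [hcon x])
    obtain ⟨x, hx⟩ := this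
    have hx0 : x ≠ 0 := by
      intro h'
      rw [h', map_zero] at hx
      exact hx rfl
    refine ⟨((‖x‖⁻¹ : ℝ) : ℂ) • x, ?_⟩
    rw [norm_smul, Complex.norm_real, Real.norm_eq_abs,
      _root_.abs_of_nonneg (inv_nonneg.mpr (norm_nonneg x)),
      inv_mul_cancel₀ (ne_of_gt (norm_pos_iff.mpr hx0))]
  -- maximizing sequence
  have hseq : ∀ n : ℕ, ∃ x : V, ‖x‖ = 1 ∧ ‖S‖ - 1 / (n + 1) < |Complex.re ⟪S x, x⟫| := by
    intro n
    by_contra hcon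
    push_neg at hcon
    obtain ⟨u, hu⟩ := hunit
    have hcnn : 0 ≤ ‖S‖ - 1 / (n + 1) :=
      le_trans (abs_nonneg _) (hcon u hu)
    have hb : ∀ x : V, |Complex.re ⟪S x, x⟫| ≤ (‖S‖ - 1 / (n + 1)) * ‖x‖ ^ 2 := by
      intro x
      rcases eq_or_ne x 0 with rfl | hx0
      · simp
      have hxn : 0 < ‖x‖ := norm_pos_iff.mpr hx0
      set xh : V := ((‖x‖⁻¹ : ℝ) : ℂ) • x with hxh
      have hxh1 : ‖xh‖ = 1 := by
        rw [hxh, norm_smul, Complex.norm_real, Real.norm_eq_abs,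
          _root_.abs_of_nonneg (inv_nonneg.mpr (norm_nonneg x)),
          inv_mul_cancel₀ (ne_of_gt hxn)]
      have hval : Complex.re ⟪S xh, xh⟫ = (‖x‖⁻¹) ^ 2 * Complex.re ⟪S x, x⟫ := by
        rw [hxh, map_smul, inner_smul_left, inner_smul_right]
        rw [Complex.conj_ofReal, ← mul_assoc, ← Complex.ofReal_mul]
        rw [ofReal_mul_re]
        ring
      have := hcon xh hxh1
      rw [hval, abs_mul, _root_.abs_of_nonneg (by positivity : (0:ℝ) ≤ (‖x‖⁻¹) ^ 2)] at this
      have h2 : |Complex.re ⟪S x, x⟫| = ‖x‖ ^ 2 * ((‖x‖⁻¹) ^ 2 * |Complex.re ⟪S x, x⟫|) := by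
        field_simp
      rw [h2]
      calc ‖x‖ ^ 2 * ((‖x‖⁻¹) ^ 2 * |Complex.re ⟪S x, x⟫|)
          ≤ ‖x‖ ^ 2 * (‖S‖ - 1 / (n + 1)) := by
            apply mul_le_mul_of_nonneg_left this (by positivity)
        _ = (‖S‖ - 1 / (n + 1)) * ‖x‖ ^ 2 := by ring
    have := opNorm_le_of_rayleigh hS hcnn hb
    have hpos : 0 < 1 / ((n : ℝ) + 1) := by positivity
    linarith
  choose x hx1 hx2 using hseq
  set r : ℕ → ℝ := fun n => Complex.re ⟪S (x n), x n⟫ with hr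
  have hrb : ∀ n, |r n| ≤ ‖S‖ := by
    intro n
    calc |r n| ≤ ‖⟪S (x n), x n⟫‖ := Complex.abs_re_le_norm _
      _ ≤ ‖S (x n)‖ * ‖x n‖ := norm_inner_le_norm _ _
      _ ≤ (‖S‖ * ‖x n‖) * ‖x n‖ := by
          apply mul_le_mul_of_nonneg_right (S.le_opNorm _) (norm_nonneg _)
      _ = ‖S‖ := by rw [hx1 n]; ring
  have habs_tend : Tendsto (fun n => |r n|) atTop (𝓝 ‖S‖) := by
    have hlow : Tendsto (fun n : ℕ => ‖S‖ - 1 / (n + 1)) atTop (𝓝 ‖S‖) := by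
      have := tendsto_one_div_add_atTop_nhds_zero_nat (𝕜 := ℝ)
      have := (tendsto_const_nhds (x := ‖S‖) (f := atTop (α := ℕ))).sub this
      simpa using this
    refine tendsto_of_tendsto_of_tendsto_of_le_of_le hlow tendsto_const_nhds
      (fun n => le_of_lt (hx2 n)) (fun n => hrb n)
  -- convergent subsequence of the Rayleigh quotients
  have hrmem : ∀ n, r n ∈ Set.Icc (-‖S‖) ‖S‖ := fun n => abs_le.mp (hrb n)
  obtain ⟨μ, -, φ, hφ, hφtend⟩ :=
    tendsto_subseq_of_bounded (Metric.isBounded_Icc (-‖S‖) ‖S‖) hrmem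
  have hμabs : |μ| = ‖S‖ := by
    have h1 : Tendsto (fun n => |r (φ n)|) atTop (𝓝 |μ|) := hφtend.abs
    have h2 : Tendsto (fun n => |r (φ n)|) atTop (𝓝 ‖S‖) :=
      habs_tend.comp hφ.tendsto_atTop
    exact tendsto_nhds_unique h1 h2
  have hμ0 : μ ≠ 0 := by
    intro h'
    rw [h', abs_zero] at hμabs
    linarith
  -- convergent subsequence of images
  have hKcpt : IsCompact (closure (⇑S '' Metric.closedBall 0 1)) :=
    IsCompactOperator.isCompact_closure_image_closedBall (f := (↑S : V →ₗ[ℂ] V)) hcpt 1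
  have hmem : ∀ n, S (x (φ n)) ∈ closure (⇑S '' Metric.closedBall 0 1) := by
    intro n
    apply subset_closure
    exact ⟨x (φ n), by simp [Metric.mem_closedBall, dist_eq_norm, hx1], rfl⟩
  obtain ⟨y, -, ψ, hψ, hytend⟩ := hKcpt.tendsto_subseq hmem
  set z : ℕ → V := fun n => x (φ (ψ n)) with hz
  have hz1 : ∀ n, ‖z n‖ = 1 := fun n => hx1 _
  have hrz : Tendsto (fun n => r (φ (ψ n))) atTop (𝓝 μ) := hφtend.comp hψ.tendsto_atTop
  have hSz : Tendsto (fun n => S (z n)) atTop (𝓝 y) := hytend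
  -- S z n - μ z n → 0
  have hdiff : Tendsto (fun n => S (z n) - (μ : ℂ) • z n) atTop (𝓝 0) := by
    have hsq : ∀ n, ‖S (z n) - (μ : ℂ) • z n‖ ^ 2 ≤ ‖S‖ ^ 2 - 2 * μ * r (φ (ψ n)) + μ ^ 2 := by
      intro n
      have hexp := @norm_sub_sq ℂ _ _ _ _ (S (z n)) ((μ : ℂ) • z n)
      simp only [RCLike.re_to_complex] at hexp
      have h1 : Complex.re ⟪S (z n), (μ : ℂ) • z n⟫ = μ * r (φ (ψ n)) := by
        rw [inner_smul_right]
        rw [ofReal_mul_re]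
      have h2 : ‖(μ : ℂ) • z n‖ ^ 2 = μ ^ 2 := by
        rw [norm_smul]
        simp only [hz1 n, mul_one, Complex.norm_real, Real.norm_eq_abs]
        exact _root_.sq_abs μ
      have h3 : ‖S (z n)‖ ^ 2 ≤ ‖S‖ ^ 2 := by
        have : ‖S (z n)‖ ≤ ‖S‖ := by
          have := S.le_opNorm (z n)
          rwa [hz1 n, mul_one] at this
        exact pow_le_pow_left₀ (norm_nonneg _) this 2
      rw [hexp, h1, h2]
      linarith
    have hB : Tendsto (fun n => ‖S‖ ^ 2 - 2 * μ * r (φ (ψ n)) + μ ^ 2) atTop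
        (𝓝 (‖S‖ ^ 2 - 2 * μ * μ + μ ^ 2)) := by
      exact (tendsto_const_nhds.sub ((tendsto_const_nhds.mul hrz))).add tendsto_const_nhds
    have hBval : ‖S‖ ^ 2 - 2 * μ * μ + μ ^ 2 = 0 := by
      have : ‖S‖ ^ 2 = μ ^ 2 := by
        rw [← hμabs, _root_.sq_abs]
      rw [this]
      ring
    rw [hBval] at hB
    have hsqt : Tendsto (fun n => ‖S (z n) - (μ : ℂ) • z n‖ ^ 2) atTop (𝓝 0) := by
      refine squeeze_zero (fun n => by positivity) hsq hB
    have hnt : Tendsto (fun n => ‖S (z n) - (μ : ℂ) • z n‖) atTop (𝓝 0) := by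
      have hcont : Tendsto Real.sqrt (𝓝 0) (𝓝 0) := by
        simpa using (Real.continuous_sqrt.tendsto 0)
      have := hcont.comp hsqt
      simpa [Function.comp_def, Real.sqrt_sq (norm_nonneg _)] using this
    exact tendsto_zero_iff_norm_tendsto_zero.mpr hnt
  have hμz : Tendsto (fun n => (μ : ℂ) • z n) atTop (𝓝 y) := by
    have := hSz.sub hdiff
    simpa using this
  have hztend : Tendsto z atTop (𝓝 (((μ : ℂ)⁻¹) • y)) := by
    have h := hμz.const_smul ((μ : ℂ)⁻¹)
    have hμC : (μ : ℂ) ≠ 0 := by simpa using hμ0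
    have heq : (fun n => ((μ : ℂ)⁻¹) • ((μ : ℂ) • z n)) = z := by
      funext n
      rw [smul_smul, inv_mul_cancel₀ hμC, one_smul]
    rwa [heq] at h
  set x0 : V := ((μ : ℂ)⁻¹) • y with hx0
  have hx0norm : ‖x0‖ = 1 := by
    have hn : Tendsto (fun n => ‖z n‖) atTop (𝓝 ‖x0‖) := hztend.norm
    have hn' : Tendsto (fun n => ‖z n‖) atTop (𝓝 1) := by
      simpa [hz1] using tendsto_const_nhds (x := (1:ℝ)) (f := atTop (α := ℕ))
    exact tendsto_nhds_unique hn hn'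
  have hSx0 : S x0 = (μ : ℂ) • x0 := by
    have h1 : Tendsto (fun n => S (z n)) atTop (𝓝 (S x0)) :=
      (S.continuous.tendsto x0).comp hztend
    have h2 : S x0 = y := tendsto_nhds_unique h1 hSz
    have hμC : (μ : ℂ) ≠ 0 := by simpa using hμ0
    rw [h2, hx0, smul_smul, mul_inv_cancel₀ hμC, one_smul]
  exact ⟨x0, μ, hx0norm, hSx0⟩

end Spectral

/-! ### Spectral theorem: eigenbasis for compact self-adjoint operators -/

variable [CompleteSpace H]

theorem exists_eigenbasis {A : H →L[ℂ] H} (hcpt : IsCompactOperator ⇑A)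
    (hA : IsSelfAdjoint A) :
    ∃ (w : Set H) (b' : HilbertBasis w ℂ H) (μ : w → ℝ),
      (∀ i : w, A (b' i) = ((μ i : ℝ) : ℂ) • (b' i)) := by
  classical
  have hsym := (isSelfAdjoint_iff_isSymmetric).mp hA
  set 𝒮 : Set (Set H) :=
    {s | Orthonormal ℂ (fun x : s => (x : H)) ∧ ∀ v ∈ s, ∃ r : ℝ, A v = (r : ℂ) • v} with h𝒮
  obtain ⟨O, hO⟩ : ∃ O, Maximal (· ∈ 𝒮) O := by
    apply zorn_subset
    intro c hc hchain
    refine ⟨⋃₀ c, ⟨?_, ?_⟩, fun s hs => subset_sUnion_of_mem hs⟩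
    · exact orthonormal_sUnion_of_directed hchain.directedOn fun a ha => (hc ha).1
    · rintro v ⟨s, hs, hvs⟩
      exact (hc hs).2 v hvs
  have hOmem : O ∈ 𝒮 := hO.prop
  set W : Submodule ℂ H := (Submodule.span ℂ O)ᗮ with hW
  have hWclosed : IsClosed (W : Set H) := Submodule.isClosed_orthogonal _
  haveI : CompleteSpace W := hWclosed.completeSpace_coe
  have hWbot : W = ⊥ := by
    by_contra hbot
    obtain ⟨w0, hw0W, hw0⟩ := Submodule.exists_mem_ne_zero_of_ne_bot hbot
    have hinv : ∀ v ∈ W, A v ∈ W := by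
      intro v hv
      rw [hW, Submodule.mem_orthogonal]
      intro u hu
      induction hu using Submodule.span_induction with
      | mem o ho =>
        obtain ⟨r, hr⟩ := hOmem.2 o ho
        have h1 : ⟪o, A v⟫ = ⟪A o, v⟫ := (hsym o v).symm
        rw [h1, hr, inner_smul_left, Complex.conj_ofReal]
        have : ⟪o, v⟫ = 0 := by
          have := (Submodule.mem_orthogonal _ v).mp hv
          exact this o (Submodule.subset_span ho)
        rw [this, mul_zero]
      | zero => simp
      | add a b _ _ ha hb => rw [inner_add_left, ha, hb, add_zero]
      | smul c a _ ha => rw [inner_smul_left, ha, mul_zero]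
    set S : W →L[ℂ] W :=
      ContinuousLinearMap.codRestrict (A.comp W.subtypeL) W
        (fun x => hinv _ x.2) with hSdef
    have hScoe : ∀ x : W, (S x : H) = A x := fun x => rfl
    have hSsa : IsSelfAdjoint S := by
      rw [isSelfAdjoint_iff_isSymmetric]
      intro u v
      have : ⟪(S u : H), (v : H)⟫ = ⟪(u : H), (S v : H)⟫ := by
        rw [hScoe, hScoe]
        exact hsym _ _
      simpa [Submodule.coe_inner] using this
    have hScpt : IsCompactOperator ⇑S := by
      have h1 : IsCompactOperator (⇑A ∘ ⇑W.subtypeL) := hcpt.comp_clm W.subtypeL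
      exact h1.codRestrict (fun x => hinv _ x.2) hWclosed
    -- find a unit eigenvector in W
    have hex : ∃ (u : H) (r : ℝ), u ∈ W ∧ ‖u‖ = 1 ∧ A u = (r : ℂ) • u := by
      by_cases hS0 : S = 0
      · have hw0n : 0 < ‖w0‖ := norm_pos_iff.mpr hw0
        refine ⟨((‖w0‖⁻¹ : ℝ) : ℂ) • w0, 0, W.smul_mem _ hw0W, ?_, ?_⟩
        · rw [norm_smul, Complex.norm_real, Real.norm_eq_abs,
            _root_.abs_of_nonneg (inv_nonneg.mpr (norm_nonneg w0)),
            inv_mul_cancel₀ (ne_of_gt hw0n)]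
        · have : A (((‖w0‖⁻¹ : ℝ) : ℂ) • w0) =
              (S (⟨((‖w0‖⁻¹ : ℝ) : ℂ) • w0, W.smul_mem _ hw0W⟩ : W) : H) := rfl
          rw [this, hS0]
          simp
      · obtain ⟨xw, rw, hxw1, hxw2⟩ := exists_unit_eigenvector hScpt hSsa hS0
        refine ⟨(xw : H), rw, xw.2, ?_, ?_⟩
        · rwa [← Submodule.norm_coe] at hxw1
        · have : A (xw : H) = (S xw : H) := rfl
          rw [this, hxw2]
          rfl
    obtain ⟨u, r, huW, hu1, hAu⟩ := hex
    have huO : u ∉ O := by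
      intro hmem
      have h1 : ⟪u, u⟫ = 0 := by
        have := (Submodule.mem_orthogonal _ u).mp huW
        exact this u (Submodule.subset_span hmem)
      rw [inner_self_eq_zero] at h1
      rw [h1, norm_zero] at hu1
      norm_num at hu1
    have hinsert : insert u O ∈ 𝒮 := by
      constructor
      · rw [orthonormal_iff_ite]
        rintro ⟨a, ha⟩ ⟨c, hc⟩
        rcases Set.mem_insert_iff.mp ha with rfl | haO <;>
          rcases Set.mem_insert_iff.mp hc with rfl | hcO
        · simp only [Subtype.mk.injEq, if_pos rfl]
          rw [inner_self_eq_norm_sq_to_K (𝕜 := ℂ), hu1]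
          norm_num
        · have h1 : ⟪a, c⟫ = 0 := by
            have := (Submodule.mem_orthogonal _ a).mp huW
            have h2 : ⟪c, a⟫ = 0 := this c (Submodule.subset_span hcO)
            rw [← inner_conj_symm, h2, map_zero]
          rw [h1]
          have : a ≠ c := fun h => huO (h ▸ hcO)
          simp [Subtype.mk.injEq, this]
        · have h1 : ⟪a, c⟫ = 0 := by
            have := (Submodule.mem_orthogonal _ c).mp huW
            exact this a (Submodule.subset_span haO)
          rw [h1]
          have : a ≠ c := fun h => huO (h ▸ haO)
          simp [Subtype.mk.injEq, this]
        · have horth := hOmem.1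
          rw [orthonormal_iff_ite] at horth
          have := horth ⟨a, haO⟩ ⟨c, hcO⟩
          simpa [Subtype.mk.injEq] using this
      · rintro v hv
        rcases Set.mem_insert_iff.mp hv with rfl | hvO
        · exact ⟨r, hAu⟩
        · exact hOmem.2 v hvO
    have := hO.2 hinsert (Set.subset_insert u O)
    exact huO (this (Set.mem_insert u O))
  -- build the Hilbert basis
  have hon : Orthonormal ℂ (fun x : O => (x : H)) := hOmem.1
  have hsp : (Submodule.span ℂ (Set.range fun x : O => (x : H)))ᗮ = ⊥ := by
    rw [Subtype.range_coe]
    exact hWbot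
  set b' : HilbertBasis O ℂ H := HilbertBasis.mkOfOrthogonalEqBot hon hsp with hb'
  have hcoe : ⇑b' = fun x : O => (x : H) := HilbertBasis.coe_mkOfOrthogonalEqBot hon hsp
  refine ⟨O, b', fun i => (hOmem.2 i i.2).choose, fun i => ?_⟩
  rw [hcoe]
  exact (hOmem.2 i i.2).choose_spec

/-! ### `X` is compact whenever `X†X` is compact -/

theorem isCompactOperator_of_adjoint_comp {X : H →L[ℂ] H}
    (h : IsCompactOperator ⇑(adjoint X ∘L X)) : IsCompactOperator ⇑X := by
  classical
  refine (isCompactOperator_iff_isCompact_closure_image_closedBall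
    (f := (↑X : H →ₗ[ℂ] H)) one_pos).mpr ?_
  rw [isCompact_iff_totallyBounded_isComplete]
  constructor
  · apply TotallyBounded.closure
    have hTB : TotallyBounded (⇑(adjoint X ∘L X) '' Metric.closedBall 0 1) := by
      have hc : IsCompact (closure (⇑(adjoint X ∘L X) '' Metric.closedBall 0 1)) :=
        IsCompactOperator.isCompact_closure_image_closedBall
          (f := (↑(adjoint X ∘L X) : H →ₗ[ℂ] H)) h 1
      exact hc.totallyBounded.subset subset_closure
    rw [Metric.totallyBounded_iff] at hTB ⊢
    intro ε hε
    set δ : ℝ := ε ^ 2 / 8 with hδ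
    obtain ⟨t, htfin, hcover⟩ := hTB δ (by positivity)
    -- choose a point of the ball mapping near each center when possible
    set q : H → H := fun c =>
      if hex : ∃ u ∈ Metric.closedBall (0 : H) 1, (adjoint X ∘L X) u ∈ Metric.ball c δ then
        hex.choose
      else 0 with hq
    refine ⟨(fun c => X (q c)) '' t, htfin.image _, ?_⟩
    intro w hw
    obtain ⟨v, hv, rfl⟩ := hw
    have hvmem : (adjoint X ∘L X) v ∈ ⋃ y ∈ t, Metric.ball y δ := hcover ⟨v, hv, rfl⟩
    simp only [Set.mem_iUnion] at hvmem
    obtain ⟨c, hct, hcball⟩ := hvmem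
    have hex : ∃ u ∈ Metric.closedBall (0 : H) 1, (adjoint X ∘L X) u ∈ Metric.ball c δ :=
      ⟨v, hv, hcball⟩
    have hqspec := hex.choose_spec
    have hqball : q c ∈ Metric.closedBall (0 : H) 1 := by
      rw [hq]
      simp only [hex, dif_pos]
      exact hqspec.1
    have hqnear : (adjoint X ∘L X) (q c) ∈ Metric.ball c δ := by
      rw [hq]
      simp only [hex, dif_pos]
      exact hqspec.2
    -- now estimate
    have hdist : ‖(adjoint X ∘L X) v - (adjoint X ∘L X) (q c)‖ < 2 * δ := by
      have h1 : dist ((adjoint X ∘L X) v) c < δ := Metric.mem_ball.mp hcball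
      have h2 : dist ((adjoint X ∘L X) (q c)) c < δ := Metric.mem_ball.mp hqnear
      have := dist_triangle ((adjoint X ∘L X) v) c ((adjoint X ∘L X) (q c))
      rw [← dist_eq_norm]
      calc dist ((adjoint X ∘L X) v) ((adjoint X ∘L X) (q c))
          ≤ dist ((adjoint X ∘L X) v) c + dist c ((adjoint X ∘L X) (q c)) := dist_triangle _ _ _
        _ < δ + δ := by rw [dist_comm c]; exact add_lt_add h1 h2
        _ = 2 * δ := by ring
    have hXid : ∀ u : H, ‖X u‖ ^ 2 = Complex.re ⟪(adjoint X ∘L X) u, u⟫ := by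
      intro u
      have h' : ⟪(adjoint X ∘L X) u, u⟫ = ⟪X u, X u⟫ := by
        rw [ContinuousLinearMap.comp_apply, adjoint_inner_left]
      rw [h']
      exact (inner_self_eq_norm_sq (𝕜 := ℂ) (X u)).symm
    have hkey : ‖X v - X (q c)‖ ^ 2 < ε ^ 2 := by
      have h1 : X v - X (q c) = X (v - q c) := by rw [map_sub]
      rw [h1, hXid (v - q c)]
      have h2 : Complex.re ⟪(adjoint X ∘L X) (v - q c), v - q c⟫ ≤
          ‖(adjoint X ∘L X) (v - q c)‖ * ‖v - q c‖ := by
        calc Complex.re ⟪(adjoint X ∘L X) (v - q c), v - q c⟫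
            ≤ ‖⟪(adjoint X ∘L X) (v - q c), v - q c⟫‖ := Complex.re_le_norm _
          _ ≤ _ := norm_inner_le_norm _ _
      have h3 : ‖(adjoint X ∘L X) (v - q c)‖ < 2 * δ := by
        rw [map_sub]
        exact hdist
      have h4 : ‖v - q c‖ ≤ 2 := by
        have hv1 : ‖v‖ ≤ 1 := by
          simpa [Metric.mem_closedBall, dist_eq_norm] using hv
        have hq1 : ‖q c‖ ≤ 1 := by
          simpa [Metric.mem_closedBall, dist_eq_norm] using hqball
        calc ‖v - q c‖ ≤ ‖v‖ + ‖q c‖ := norm_sub_le _ _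
          _ ≤ 2 := by linarith
      have h5 : ‖(adjoint X ∘L X) (v - q c)‖ * ‖v - q c‖ < 2 * δ * 2 := by
        rcases eq_or_lt_of_le (norm_nonneg (v - q c)) with h0 | h0
        · rw [← h0, mul_zero]
          positivity
        · calc ‖(adjoint X ∘L X) (v - q c)‖ * ‖v - q c‖
              ≤ ‖(adjoint X ∘L X) (v - q c)‖ * 2 := by
                apply mul_le_mul_of_nonneg_left h4 (norm_nonneg _)
            _ < 2 * δ * 2 := by
                apply mul_lt_mul_of_pos_right h3
                norm_num
      have : 2 * δ * 2 = ε ^ 2 / 2 := by rw [hδ]; ring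
      nlinarith
    have : ‖X v - X (q c)‖ < ε := by
      have hnn : 0 ≤ ε := le_of_lt hε
      nlinarith [norm_nonneg (X v - X (q c))]
    simp only [Set.mem_iUnion]
    exact ⟨X (q c), ⟨c, hct, rfl⟩, by rwa [Metric.mem_ball, dist_eq_norm]⟩
  · exact isClosed_closure.isComplete

/-! ### Main construction -/

set_option maxHeartbeats 2000000 in
theorem main_selfadjoint (j : AntiConj H) (A : H →L[ℂ] H) (hA : IsSelfAdjoint A)
    (hcpt : IsCompactOperator ⇑A) (hAJ : ∀ v, A (j.J v) = -(j.J (A v))) :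
    ∃ X : H →L[ℂ] H, IsCompactOperator ⇑X ∧
      (∀ v, X v = -(j.J ((adjoint X) (-(j.J v))))) ∧
      adjoint X ∘L X - X ∘L adjoint X = A := by
  classical
  obtain ⟨ιw, b', μ, hb⟩ := exists_eigenbasis hcpt hA
  have hsym := (isSelfAdjoint_iff_isSymmetric).mp hA
  set g : ιw → ℝ := fun i => Real.sqrt (max (μ i) 0) with hgdef
  have hg0 : ∀ i, 0 ≤ g i := fun i => Real.sqrt_nonneg _
  have hgsq : ∀ i, g i * g i = max (μ i) 0 := fun i =>
    Real.mul_self_sqrt (le_max_right _ _)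
  have hμb : ∀ i, |μ i| ≤ ‖A‖ := by
    intro i
    have h1 : ‖A (b' i)‖ ≤ ‖A‖ * ‖b' i‖ := A.le_opNorm _
    have h2 : ‖b' i‖ = 1 := b'.orthonormal.1 i
    rw [hb i, norm_smul] at h1
    simp only [h2, mul_one, Complex.norm_real, Real.norm_eq_abs] at h1
    exact h1
  have hgb : ∀ i, g i ≤ Real.sqrt ‖A‖ := by
    intro i
    apply Real.sqrt_le_sqrt
    rcases le_or_gt (μ i) 0 with h | h
    · rw [max_eq_right h]
      exact norm_nonneg A
    · rw [max_eq_left (le_of_lt h)]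
      calc μ i ≤ |μ i| := le_abs_self _
        _ ≤ ‖A‖ := hμb i
  -- coordinates of A
  have hAco : ∀ (w : H) (i : ιw), b'.repr (A w) i = (μ i : ℂ) * b'.repr w i := by
    intro w i
    rw [b'.repr_apply_apply, b'.repr_apply_apply]
    have h1 : ⟪b' i, A w⟫ = ⟪A (b' i), w⟫ := (hsym (b' i) w).symm
    rw [h1, hb i, inner_smul_left, Complex.conj_ofReal]
  -- the conjugate-linear "half" of A₊
  have hmem : ∀ v : H, Memℓp (fun i => ((g i : ℝ) : ℂ) * (starRingEnd ℂ) (b'.repr v i)) 2 := by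
    intro v
    apply memℓp_two_of_le (y := b'.repr v) (M := Real.sqrt ‖A‖)
    intro i
    rw [norm_mul, RingHomIsometric.norm_map]
    apply mul_le_mul_of_nonneg_right _ (norm_nonneg _)
    rw [Complex.norm_real, Real.norm_eq_abs, _root_.abs_of_nonneg (hg0 i)]
    exact hgb i
  set K : H → H := fun v => b'.repr.symm ⟨_, hmem v⟩ with hK
  have hKco : ∀ (v : H) (i : ιw),
      b'.repr (K v) i = ((g i : ℝ) : ℂ) * (starRingEnd ℂ) (b'.repr v i) := by
    intro v i
    rw [hK]
    simp only [LinearIsometryEquiv.apply_symm_apply]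
  -- extensionality via coordinates
  have hext : ∀ u v : H, (∀ i, b'.repr u i = b'.repr v i) → u = v := by
    intro u v h
    apply b'.repr.injective
    exact lp.ext (funext h)
  have hreprAdd : ∀ (u v : H) (i : ιw), b'.repr (u + v) i = b'.repr u i + b'.repr v i := by
    intro u v i
    rw [map_add]
    simp [lp.coeFn_add]
  have hreprSmul : ∀ (c : ℂ) (v : H) (i : ιw), b'.repr (c • v) i = c * b'.repr v i := by
    intro c v i
    rw [map_smul]
    simp [lp.coeFn_smul]
  have hKadd : ∀ u v, K (u + v) = K u + K v := by
    intro u v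
    apply hext
    intro i
    rw [hreprAdd, hKco, hKco, hKco, hreprAdd]
    simp only [map_add]
    ring
  have hKsmul : ∀ (c : ℂ) (v), K (c • v) = (starRingEnd ℂ) c • K v := by
    intro c v
    apply hext
    intro i
    rw [hreprSmul, hKco, hKco, hreprSmul]
    simp only [map_mul]
    ring
  have hKneg : ∀ v, K (-v) = -K v := by
    intro v
    have h := hKsmul (-1) v
    simpa using h
  have hKnorm : ∀ v, ‖K v‖ ≤ Real.sqrt ‖A‖ * ‖v‖ := by
    intro v
    rw [hK]
    rw [LinearIsometryEquiv.norm_map]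
    have : ‖b'.repr v‖ = ‖v‖ := b'.repr.norm_map v
    rw [← this]
    apply lp_norm_le_of_le (Real.sqrt_nonneg _)
    intro i
    rw [norm_mul, RingHomIsometric.norm_map]
    apply mul_le_mul_of_nonneg_right _ (norm_nonneg _)
    rw [Complex.norm_real, Real.norm_eq_abs, _root_.abs_of_nonneg (hg0 i)]
    exact hgb i
  -- X = J ∘ K  and its adjoint candidate X' = -K ∘ J
  set X : H →L[ℂ] H :=
    LinearMap.mkContinuous
      { toFun := fun v => j.J (K v)
        map_add' := fun u v => by
          show j.J (K (u + v)) = j.J (K u) + j.J (K v)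
          rw [hKadd, j.add']
        map_smul' := fun c v => by
          show j.J (K (c • v)) = c • j.J (K v)
          rw [hKsmul, j.smul', starRingEnd_self_apply] }
      (Real.sqrt ‖A‖)
      (fun v => by
        simp only [LinearMap.coe_mk, AddHom.coe_mk]
        rw [j.norm']
        exact hKnorm v) with hX
  have hXapp : ∀ v, X v = j.J (K v) := fun v => rfl
  set X' : H →L[ℂ] H :=
    LinearMap.mkContinuous
      { toFun := fun v => -K (j.J v)
        map_add' := fun u v => by
          show -K (j.J (u + v)) = -K (j.J u) + -K (j.J v)
          rw [j.add', hKadd]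
          abel
        map_smul' := fun c v => by
          show -K (j.J (c • v)) = c • -K (j.J v)
          rw [j.smul', hKsmul, starRingEnd_self_apply, smul_neg] }
      (Real.sqrt ‖A‖)
      (fun v => by
        simp only [LinearMap.coe_mk, AddHom.coe_mk]
        rw [norm_neg]
        calc ‖K (j.J v)‖ ≤ Real.sqrt ‖A‖ * ‖j.J v‖ := hKnorm _
          _ = Real.sqrt ‖A‖ * ‖v‖ := by rw [j.norm']) with hX'
  have hX'app : ∀ v, X' v = -K (j.J v) := fun v => rfl
  -- the inner-product formula
  have hinner : ∀ u v : H, ⟪u, v⟫ =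
      ∑' i, (starRingEnd ℂ) (b'.repr u i) * (b'.repr v i) := by
    intro u v
    rw [← b'.tsum_inner_mul_inner u v]
    apply tsum_congr
    intro i
    rw [b'.repr_apply_apply, b'.repr_apply_apply, ← inner_conj_symm]
  have hKsym : ∀ u v : H, ⟪K u, v⟫ = ⟪K v, u⟫ := by
    intro u v
    rw [hinner (K u) v, hinner (K v) u]
    apply tsum_congr
    intro i
    rw [hKco, hKco]
    simp only [map_mul, RingHomCompTriple.comp_apply, RingHom.id_apply,
      Complex.conj_conj, Complex.conj_ofReal]
    ring
  -- X' is the adjoint of X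
  have hadj : adjoint X = X' := by
    symm
    rw [eq_adjoint_iff]
    intro x y
    rw [hX'app, hXapp, inner_neg_left]
    have h1 : ⟪K (j.J x), y⟫ = ⟪K y, j.J x⟫ := hKsym _ _
    rw [h1]
    have h2 : ⟪x, j.J (K y)⟫ = (starRingEnd ℂ) ⟪j.J (K y), x⟫ := (inner_conj_symm _ _).symm
    rw [h2, j.inner_left (K y) x, map_neg, inner_conj_symm]
  -- the J-symmetry of X
  have hXJ : ∀ v, X v = -(j.J ((adjoint X) (-(j.J v)))) := by
    intro v
    have h1 : j.J (-(j.J v)) = v := by rw [j.map_neg, j.JJ, neg_neg]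
    rw [hadj, hX'app, h1, j.map_neg, neg_neg]
    exact hXapp v
  -- key computation : K (K w) for eigenvectors
  have hKK : ∀ (w : H) (ρ : ℝ), A w = (ρ : ℂ) • w →
      K (K w) = ((max ρ 0 : ℝ) : ℂ) • w := by
    intro w ρ hw
    apply hext
    intro i
    rw [hKco, hKco, map_smul]
    simp only [lp.coeFn_smul, Pi.smul_apply, smul_eq_mul, map_mul, Complex.conj_conj,
      Complex.conj_ofReal]
    have hcoord : (μ i : ℂ) * b'.repr w i = (ρ : ℂ) * b'.repr w i := by
      rw [← hAco w i, hw, map_smul, lp.coeFn_smul, Pi.smul_apply, smul_eq_mul]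
    rcases eq_or_ne (b'.repr w i) 0 with h0 | h0
    · rw [h0]
      ring
    · have hμρ : μ i = ρ := by
        have h' := mul_right_cancel₀ h0 hcoord
        exact Complex.ofReal_inj.mp h'
      have hgg : ((g i : ℝ) : ℂ) * ((g i : ℝ) : ℂ) = ((max ρ 0 : ℝ) : ℂ) := by
        rw [← Complex.ofReal_mul, hgsq i, hμρ]
      calc ((g i : ℝ) : ℂ) * (((g i : ℝ) : ℂ) * b'.repr w i)
          = (((g i : ℝ) : ℂ) * ((g i : ℝ) : ℂ)) * b'.repr w i := by ring
        _ = ((max ρ 0 : ℝ) : ℂ) * b'.repr w i := by rw [hgg]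
  -- eigen-equation for J (b' i)
  have hJeig : ∀ i, A (j.J (b' i)) = ((-μ i : ℝ) : ℂ) • j.J (b' i) := by
    intro i
    rw [hAJ, hb i, j.smul', Complex.conj_ofReal]
    rw [← neg_smul]
    push_cast
    ring_nf
  -- basis extensionality for operators
  have hopext : ∀ F G : H →L[ℂ] H, (∀ i, F (b' i) = G (b' i)) → F = G := by
    intro F G hFG
    have hdense : Dense (Submodule.span ℂ (Set.range ⇑b') : Set H) :=
      Submodule.dense_iff_topologicalClosure_eq_top.mpr b'.dense_span
    apply ContinuousLinearMap.ext_on hdense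
    rintro x ⟨i, rfl⟩
    exact hFG i
  -- the commutator identity
  have hcomm : adjoint X ∘L X - X ∘L adjoint X = A := by
    apply hopext
    intro i
    have h1 : (adjoint X ∘L X) (b' i) = ((max (μ i) 0 : ℝ) : ℂ) • b' i := by
      rw [ContinuousLinearMap.comp_apply, hadj, hX'app, hXapp, j.JJ, hKneg, neg_neg]
      exact hKK (b' i) (μ i) (hb i)
    have h2 : (X ∘L adjoint X) (b' i) = ((max (-μ i) 0 : ℝ) : ℂ) • b' i := by
      rw [ContinuousLinearMap.comp_apply, hadj, hX'app, hXapp, hKneg]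
      rw [hKK (j.J (b' i)) (-μ i) (hJeig i)]
      rw [j.map_neg, j.smul', Complex.conj_ofReal, j.JJ]
      rw [smul_neg, neg_neg]
    rw [ContinuousLinearMap.sub_apply, h1, h2, hb i]
    rw [← sub_smul, ← Complex.ofReal_sub]
    congr 1
    congr 1
    rcases le_total (μ i) 0 with h | h
    · rw [max_eq_right h, max_eq_left (by linarith)]
      ring
    · rw [max_eq_left h, max_eq_right (by linarith)]
      ring
  -- compactness of X
  have hXcpt : IsCompactOperator ⇑X := by
    apply isCompactOperator_of_adjoint_comp
    -- adjoint X ∘L X = A ∘L P for the spectral projection P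
    have hmemP : ∀ v : H,
        Memℓp (fun i => (if 0 < μ i then (1 : ℂ) else 0) * (b'.repr v i)) 2 := by
      intro v
      apply memℓp_two_of_le (y := b'.repr v) (M := 1)
      intro i
      rw [norm_mul, one_mul]
      rcases lt_or_ge 0 (μ i) with h | h
      · simp [h]
      · simp [not_lt.mpr h]
    set P : H →L[ℂ] H :=
      LinearMap.mkContinuous
        { toFun := fun v => b'.repr.symm ⟨_, hmemP v⟩
          map_add' := fun u v => by
            apply hext
            intro i
            simp only [LinearIsometryEquiv.apply_symm_apply, map_add, lp.coeFn_add,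
              Pi.add_apply]
            ring
          map_smul' := fun c v => by
            simp only [RingHom.id_apply]
            apply hext
            intro i
            simp only [LinearIsometryEquiv.apply_symm_apply, map_smul, lp.coeFn_smul,
              Pi.smul_apply, smul_eq_mul]
            ring }
        1
        (fun v => by
          simp only [LinearMap.coe_mk, AddHom.coe_mk]
          rw [LinearIsometryEquiv.norm_map]
          have hv : ‖b'.repr v‖ = ‖v‖ := b'.repr.norm_map v
          rw [← hv, one_mul]
          have := lp_norm_le_of_le (x := (⟨_, hmemP v⟩ : lp (fun _ : ιw => ℂ) 2))
            (y := b'.repr v) (M := 1) zero_le_one ?_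
          · simpa using this
          · intro i
            rw [one_mul]
            rcases lt_or_ge 0 (μ i) with h | h
            · simp [h]
            · simp [not_lt.mpr h]) with hP
    have hPco : ∀ (v : H) (i : ιw),
        b'.repr (P v) i = (if 0 < μ i then (1 : ℂ) else 0) * (b'.repr v i) := by
      intro v i
      rw [hP]
      simp only [LinearMap.mkContinuous_apply, LinearMap.coe_mk, AddHom.coe_mk,
        LinearIsometryEquiv.apply_symm_apply]
    have hcompeq : adjoint X ∘L X = A ∘L P := by
      apply ContinuousLinearMap.ext
      intro v
      apply hext
      intro i
      have hlhs : (adjoint X ∘L X) v = K (K v) := by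
        rw [ContinuousLinearMap.comp_apply, hadj, hX'app, hXapp, j.JJ, hKneg, neg_neg]
      rw [hlhs, ContinuousLinearMap.comp_apply, hAco, hPco, hKco, hKco]
      simp only [map_mul, Complex.conj_conj, Complex.conj_ofReal]
      have hgg : ((g i : ℝ) : ℂ) * ((g i : ℝ) : ℂ) = ((max (μ i) 0 : ℝ) : ℂ) := by
        rw [← Complex.ofReal_mul, hgsq i]
      calc ((g i : ℝ) : ℂ) * (((g i : ℝ) : ℂ) * b'.repr v i)
          = (((g i : ℝ) : ℂ) * ((g i : ℝ) : ℂ)) * b'.repr v i := by ring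
        _ = ((max (μ i) 0 : ℝ) : ℂ) * b'.repr v i := by rw [hgg]
        _ = (μ i : ℂ) * ((if 0 < μ i then (1:ℂ) else 0) * b'.repr v i) := by
            rcases lt_or_ge 0 (μ i) with h | h
            · rw [if_pos h, one_mul, max_eq_left (le_of_lt h)]
            · rw [if_neg (not_lt.mpr h), zero_mul, mul_zero, max_eq_right h]
              simp
    rw [hcompeq]
    have : ⇑(A ∘L P) = ⇑A ∘ ⇑P := ContinuousLinearMap.coe_comp' A P
    rw [this]
    exact hcpt.comp_clm P
  exact ⟨X, hXcpt, hXJ, hcomm⟩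

end

end Sp11Aux

theorem stmt_11 {H : Type*} [NormedAddCommGroup H] [InnerProductSpace ℂ H] [CompleteSpace H]
    (b : HilbertBasis ℕ ℂ H)
    (J : H → H)
    (hadd : ∀ v w, J (v + w) = J v + J w)
    (hsmul : ∀ (c : ℂ) (v : H), J (c • v) = (starRingEnd ℂ) c • J v)
    (hnorm : ∀ v, ‖J v‖ = ‖v‖)
    (hbij : Function.Bijective J)
    (hJJ : ∀ v, J (J v) = -v)
    (T : H →L[ℂ] H) (hcpt : IsCompactOperator ⇑T)
    (hTJ : ∀ v, T v = -(J (adjoint T (-(J v))))) :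
    ∃ X Y : H →L[ℂ] H, IsCompactOperator ⇑X ∧ IsCompactOperator ⇑Y ∧
      (∀ v, X v = -(J (adjoint X (-(J v))))) ∧
      (∀ v, Y v = -(J (adjoint Y (-(J v))))) ∧
      T = (adjoint X ∘L X - X ∘L adjoint X) +
        Complex.I • (adjoint Y ∘L Y - Y ∘L adjoint Y) := by
  classical
  let j : Sp11Aux.AntiConj H := ⟨J, hadd, hsmul, hnorm, hJJ⟩
  have jneg : ∀ v : H, J (-v) = -J v := j.map_neg
  have jadd : ∀ v w : H, J (v + w) = J v + J w := j.add'
  have jsub : ∀ v w : H, J (v - w) = J v - J w := j.map_sub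
  -- T = J ∘ T† ∘ J
  have hT' : ∀ v, T v = J (adjoint T (J v)) := by
    intro v
    rw [hTJ v, map_neg, jneg, neg_neg]
  -- T† = J ∘ T ∘ J
  have hTeq : T = j.conjJ (adjoint T) := by
    apply ContinuousLinearMap.ext
    intro v
    rw [j.conjJ_apply]
    exact hT' v
  have hTadj : adjoint T = j.conjJ T := by
    calc adjoint T = adjoint (j.conjJ (adjoint T)) := by rw [← hTeq]
      _ = j.conjJ (adjoint (adjoint T)) := j.adjoint_conjJ _
      _ = j.conjJ T := by rw [adjoint_adjoint]
  have hTadj' : ∀ v, adjoint T v = J (T (J v)) := by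
    intro v
    rw [hTadj]
    rfl
  have hadjcpt : IsCompactOperator ⇑(adjoint T) := by
    rw [hTadj]
    exact j.isCompactOperator_conjJ hcpt
  -- real and imaginary parts
  set A : H →L[ℂ] H := ((2 : ℂ)⁻¹) • (T + adjoint T) with hAdef
  set B : H →L[ℂ] H := (-(Complex.I / 2)) • (T - adjoint T) with hBdef
  have hAsa : IsSelfAdjoint A := by
    rw [IsSelfAdjoint, hAdef, star_smul, star_add, ContinuousLinearMap.star_eq_adjoint,
      ContinuousLinearMap.star_eq_adjoint, adjoint_adjoint]
    have h1 : star ((2:ℂ)⁻¹) = (2:ℂ)⁻¹ := by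
      simp [Complex.ext_iff]
    rw [h1, add_comm]
  have hBsa : IsSelfAdjoint B := by
    rw [IsSelfAdjoint, hBdef, star_smul, star_sub, ContinuousLinearMap.star_eq_adjoint,
      ContinuousLinearMap.star_eq_adjoint, adjoint_adjoint]
    have h1 : star (-(Complex.I / 2)) = Complex.I / 2 := by
      rw [star_neg, star_div₀, Complex.star_def, Complex.conj_I, map_ofNat]
      ring
    rw [h1]
    rw [show adjoint T - T = -(T - adjoint T) by abel]
    rw [smul_neg, ← neg_smul]
  have hAcpt : IsCompactOperator ⇑A := by
    have h1 : IsCompactOperator (⇑T + ⇑(adjoint T)) := hcpt.add hadjcpt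
    have h2 : IsCompactOperator ⇑(T + adjoint T) := h1
    exact h2.smul ((2:ℂ)⁻¹)
  have hBcpt : IsCompactOperator ⇑B := by
    have h1 : IsCompactOperator (⇑T - ⇑(adjoint T)) := hcpt.sub hadjcpt
    have h2 : IsCompactOperator ⇑(T - adjoint T) := h1
    exact h2.smul (-(Complex.I / 2))
  -- anticommutation with J
  have hTJv : ∀ v, T (J v) = -(J (adjoint T v)) := by
    intro v
    rw [hT' (J v), hJJ, map_neg, jneg]
  have hTadjJv : ∀ v, adjoint T (J v) = -(J (T v)) := by
    intro v
    rw [hTadj' (J v), hJJ, map_neg, jneg]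
  have hAJ : ∀ v, A (J v) = -(J (A v)) := by
    intro v
    rw [hAdef]
    simp only [ContinuousLinearMap.smul_apply, ContinuousLinearMap.add_apply]
    rw [hTJv, hTadjJv]
    have h1 : J ((2:ℂ)⁻¹ • (T v + adjoint T v)) = (2:ℂ)⁻¹ • J (T v + adjoint T v) := by
      rw [hsmul]
      congr 1
      simp [Complex.ext_iff]
    rw [h1, jadd]
    rw [smul_add, smul_neg, smul_neg, ← neg_add, ← smul_add,
      add_comm (J ((adjoint T) v)) (J (T v))]
  have hBJ : ∀ v, B (J v) = -(J (B v)) := by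
    intro v
    rw [hBdef]
    simp only [ContinuousLinearMap.smul_apply, ContinuousLinearMap.sub_apply]
    rw [hTJv, hTadjJv]
    have h1 : J ((-(Complex.I / 2)) • (T v - adjoint T v)) =
        (Complex.I / 2) • J (T v - adjoint T v) := by
      rw [hsmul]
      congr 1
      rw [map_neg, map_div₀, Complex.conj_I, map_ofNat]
      ring
    rw [h1, jsub]
    rw [show -(J (adjoint T v)) - -(J (T v)) = J (T v) - J (adjoint T v) by abel]
    rw [← neg_smul]
  -- apply the main construction
  obtain ⟨X, hXcpt, hXJ, hXcomm⟩ := Sp11Aux.main_selfadjoint j A hAsa hAcpt hAJ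
  obtain ⟨Y, hYcpt, hYJ, hYcomm⟩ := Sp11Aux.main_selfadjoint j B hBsa hBcpt hBJ
  refine ⟨X, Y, hXcpt, hYcpt, hXJ, hYJ, ?_⟩
  rw [hXcomm, hYcomm, hAdef, hBdef]
  rw [smul_smul]
  have hs : Complex.I * -(Complex.I / 2) = (2:ℂ)⁻¹ := by
    have h' : Complex.I * Complex.I = -1 := Complex.I_mul_I
    field_simp
    rw [sq, h', neg_neg]
  rw [hs]
  rw [← smul_add]
  have hsum : (T + adjoint T) + (T - adjoint T) = (2:ℂ) • T := by
    rw [two_smul]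
    abel
  rw [hsum, smul_smul]
  norm_num
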